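/- Let p be an even positive integer, and define the polynomials G_n(p) ∈ ℝ[t] by G_0(p) = 1 and G_n(p) = (p/n) Σ_{k=1}^{n} (−1)^{k+1} B_k · G_{n−k}(p) for n ≥ 1, where B_k ∈ ℝ[t] is the k-th Bernoulli polynomial. Then G_{p+1}(p) is identically zero. -/

import Mathlib

open Finset Polynomial

/-- The `k`-th Bernoulli polynomial as a real polynomial
(generating function `u e^{tu}/(e^u - 1)`, so `bernR 1 = X - 1/2`). -/
noncomputable def bernR (k : ℕ) : Polynomial ℝ :=
  (Polynomial.bernoulli k).map (algebraMap ℚ ℝ)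

lemma bernR_zero : bernR 0 = 1 := by simp [bernR]

lemma derivative_bernR (k : ℕ) :
    derivative (bernR k) = C (k : ℝ) * bernR (k - 1) := by
  rw [bernR, derivative_map, Polynomial.derivative_bernoulli, bernR, Polynomial.map_mul]
  simp

lemma sum_Icc_one {M : Type*} [AddCommMonoid M] (N : ℕ) (f : ℕ → M) :
    ∑ k ∈ Icc 1 N, f k = ∑ i ∈ range N, f (1 + i) := by
  rw [← Finset.Ico_add_one_right_eq_Icc, Finset.sum_Ico_eq_sum_range]
  simp


lemma bernR_eval_zero (k : ℕ) : (bernR k).eval 0 = ((_root_.bernoulli k : ℚ) : ℝ) := by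
  rw [bernR, eval_zero_map, Polynomial.bernoulli_eval_zero]; rfl

lemma bernR_eval_one (k : ℕ) :
    (bernR k).eval 1 = (((-1 : ℚ) ^ k * _root_.bernoulli k : ℚ) : ℝ) := by
  rw [bernR, eval_one_map, Polynomial.bernoulli_eval_one, ← bernoulli'_eq_bernoulli]; rfl

lemma bernR_comp_one_sub (k : ℕ) : (bernR k).comp (1 - X) = (-1) ^ k * bernR k := by
  induction k with
  | zero => simp [bernR_zero]
  | succ k ih =>
    have hd : derivative ((bernR (k+1)).comp (1 - X) - (-1) ^ (k+1) * bernR (k+1)) = 0 := by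
      rw [derivative_sub, derivative_comp, derivative_bernR]
      simp [ih, derivative_bernR, mul_comp]
      simp [derivative_pow]
      ring
    obtain ⟨c, hc⟩ : ∃ c, (bernR (k+1)).comp (1 - X) - (-1) ^ (k+1) * bernR (k+1) = C c :=
      ⟨_, Polynomial.eq_C_of_derivative_eq_zero hd⟩
    have h0 : ((bernR (k+1)).comp (1 - X) - (-1) ^ (k+1) * bernR (k+1)).eval 0 = 0 := by
      simp [eval_comp, bernR_eval_zero, bernR_eval_one]
    rw [hc] at h0
    simp only [eval_C] at h0
    rw [sub_eq_iff_eq_add] at hc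
    rw [hc, h0]
    simp

lemma G_symm (p : ℕ) (G : ℕ → Polynomial ℝ) (hG0 : G 0 = 1)
    (hG : ∀ n : ℕ, 1 ≤ n →
      G n = Polynomial.C ((p : ℝ) / (n : ℝ)) *
        ∑ k ∈ Finset.Icc 1 n, (-1 : Polynomial ℝ) ^ (k + 1) * bernR k * G (n - k)) :
    ∀ n, (G n).comp (1 - X) = (-1) ^ n * G n := by
  intro n
  induction n using Nat.strong_induction_on with
  | _ n ih =>
    rcases Nat.eq_zero_or_pos n with h0 | h1
    · subst h0; simp [hG0]
    · rw [hG n h1, mul_comp, C_comp, Polynomial.sum_comp, mul_left_comm]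
      congr 1
      rw [Finset.mul_sum]
      refine Finset.sum_congr rfl fun k hk => ?_
      simp only [Finset.mem_Icc] at hk
      rw [mul_comp, mul_comp, pow_comp, neg_comp, one_comp, bernR_comp_one_sub,
        ih (n - k) (by omega)]
      have h : (-1 : Polynomial ℝ) ^ k * (-1) ^ (n - k) = (-1) ^ n := by
        rw [← pow_add]; congr 1; omega
      linear_combination ((-1 : Polynomial ℝ) ^ (k + 1) * bernR k * G (n - k)) * h

lemma G_deriv (p : ℕ) (hp : 0 < p) (G : ℕ → Polynomial ℝ) (hG0 : G 0 = 1)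
    (hG : ∀ n : ℕ, 1 ≤ n →
      G n = Polynomial.C ((p : ℝ) / (n : ℝ)) *
        ∑ k ∈ Finset.Icc 1 n, (-1 : Polynomial ℝ) ^ (k + 1) * bernR k * G (n - k)) :
    ∀ n, 1 ≤ n → derivative (G n) = C ((p : ℝ) - n + 1) * G (n - 1) := by
  have hp0 : (p : ℝ) ≠ 0 := Nat.cast_ne_zero.mpr hp.ne'
  intro n
  induction n using Nat.strong_induction_on with
  | _ n ih =>
    intro h1
    rcases eq_or_lt_of_le h1 with h | h2
    · have hn : n = 1 := h.symm
      subst hn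
      rw [hG 1 le_rfl]
      simp [derivative_bernR, bernR_zero, hG0]
    · obtain ⟨m, rfl⟩ : ∃ m, n = m + 1 := ⟨n - 1, by omega⟩
      have hm : 1 ≤ m := by omega
      have hm0 : (m : ℝ) ≠ 0 := Nat.cast_ne_zero.mpr (by omega)
      set T : Polynomial ℝ :=
        ∑ i ∈ range m, (-1 : Polynomial ℝ) ^ (1 + i + 1) * bernR (1 + i) * G (m - 1 - i) with hT
      have hGm : G m = C ((p : ℝ) / (m : ℝ)) * T := by
        rw [hG m hm, sum_Icc_one]
        congr 1
        exact Finset.sum_congr rfl fun i _ => by rw [show m - (1 + i) = m - 1 - i by omega]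
      -- derivative of each summand
      have hsplit : ∀ k ∈ Icc 1 (m + 1),
          derivative ((-1 : Polynomial ℝ) ^ (k + 1) * bernR k * G (m + 1 - k)) =
            (-1 : Polynomial ℝ) ^ (k + 1) * (C (k : ℝ) * bernR (k - 1)) * G (m + 1 - k)
            + (-1 : Polynomial ℝ) ^ (k + 1) * bernR k * derivative (G (m + 1 - k)) := by
        intro k hk
        rw [derivative_mul, derivative_mul, derivative_pow]
        simp only [derivative_neg, derivative_one, neg_zero, mul_zero, zero_mul, add_zero,
          zero_add, derivative_bernR]
      have hA : ∑ k ∈ Icc 1 (m + 1),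
          (-1 : Polynomial ℝ) ^ (k + 1) * (C (k : ℝ) * bernR (k - 1)) * G (m + 1 - k)
          = G m + ∑ i ∈ range m,
              (-1 : Polynomial ℝ) ^ (i + 1 + 1 + 1) * (C ((i : ℝ) + 2) * bernR (i + 1))
                * G (m - 1 - i) := by
        rw [sum_Icc_one, Finset.sum_range_succ']
        rw [add_comm]
        congr 1
        · norm_num [bernR_zero]
        · refine Finset.sum_congr rfl fun i hi => ?_
          rw [show 1 + (i + 1) = i + 1 + 1 by omega, show i + 1 + 1 - 1 = i + 1 by omega,
            show m + 1 - (i + 1 + 1) = m - 1 - i by omega]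
          push_cast
          ring
      have hB : ∑ k ∈ Icc 1 (m + 1),
          (-1 : Polynomial ℝ) ^ (k + 1) * bernR k * derivative (G (m + 1 - k))
          = ∑ i ∈ range m,
              (-1 : Polynomial ℝ) ^ (1 + i + 1) * bernR (1 + i)
                * (C ((p : ℝ) - ((m : ℝ) - i) + 1) * G (m - 1 - i)) := by
        rw [sum_Icc_one, Finset.sum_range_succ]
        rw [show m + 1 - (1 + m) = 0 by omega]
        have : derivative (G 0) = 0 := by rw [hG0]; simp
        rw [this, mul_zero, add_zero]
        refine Finset.sum_congr rfl fun i hi => ?_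
        rw [mem_range] at hi
        rw [show m + 1 - (1 + i) = m - i by omega,
          ih (m - i) (by omega) (by omega),
          show m - i - 1 = m - 1 - i by omega,
          Nat.cast_sub hi.le]
      -- combine
      have hAB : (G m + ∑ i ∈ range m,
              (-1 : Polynomial ℝ) ^ (i + 1 + 1 + 1) * (C ((i : ℝ) + 2) * bernR (i + 1))
                * G (m - 1 - i))
          + ∑ i ∈ range m,
              (-1 : Polynomial ℝ) ^ (1 + i + 1) * bernR (1 + i)
                * (C ((p : ℝ) - ((m : ℝ) - i) + 1) * G (m - 1 - i))
          = G m + C ((p : ℝ) - (m : ℝ) - 1) * T := by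
        rw [add_assoc, ← Finset.sum_add_distrib, hT, Finset.mul_sum]
        congr 1
        refine Finset.sum_congr rfl fun i hi => ?_
        rw [show i + 1 + 1 + 1 = (1 + i + 1) + 1 by omega, show 1 + i = i + 1 by omega]
        rw [pow_succ]
        have hC : C ((p : ℝ) - (m : ℝ) - 1) =
            -(C ((i : ℝ) + 2)) + C ((p : ℝ) - ((m : ℝ) - i) + 1) := by
          rw [← map_neg, ← map_add]; congr 1; ring
        rw [hC]
        ring
      rw [hG (m + 1) (by omega), derivative_C_mul, derivative_sum,
        Finset.sum_congr rfl hsplit, Finset.sum_add_distrib, hA, hB, hAB]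
      -- final scalar computation
      have hTval : C ((p : ℝ) - (m : ℝ) - 1) * T =
          C (((p : ℝ) - (m : ℝ) - 1) * ((m : ℝ) / (p : ℝ))) * G m := by
        have : T = C ((m : ℝ) / (p : ℝ)) * G m := by
          rw [hGm, ← mul_assoc, ← C_mul]
          rw [show (m : ℝ) / p * ((p : ℝ) / m) = 1 by field_simp]
          rw [map_one, one_mul]
        rw [this, ← mul_assoc, ← C_mul]
      rw [hTval, show m + 1 - 1 = m from rfl]
      have hm1 : (m : ℝ) + 1 ≠ 0 := by positivity
      push_cast
      rw [show (p : ℝ) - ((m : ℝ) + 1) + 1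
          = (p : ℝ) / ((m : ℝ) + 1) * (1 + ((p : ℝ) - m - 1) * ((m : ℝ) / p)) from by
        field_simp; ring_nf]
      simp only [map_mul, map_add, map_one]
      ring


/-- if `p` is an even positive integer, then `G_{p+1}(p) ≡ 0`. -/
theorem G_succ_eq_zero_of_even
    (p : ℕ) (hp : 0 < p) (hpe : Even p)
    (G : ℕ → Polynomial ℝ) (hG0 : G 0 = 1)
    (hG : ∀ n : ℕ, 1 ≤ n →
      G n = Polynomial.C ((p : ℝ) / (n : ℝ)) *
        ∑ k ∈ Finset.Icc 1 n, (-1 : Polynomial ℝ) ^ (k + 1) * bernR k * G (n - k)) :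
    G (p + 1) = 0 := by
  have hd : derivative (G (p + 1)) = 0 := by
    rw [G_deriv p hp G hG0 hG (p + 1) (by omega)]
    push_cast
    norm_num
  obtain ⟨c, hc⟩ : ∃ c, G (p + 1) = C c :=
    ⟨_, Polynomial.eq_C_of_derivative_eq_zero hd⟩
  have hs := G_symm p G hG0 hG (p + 1)
  rw [hc] at hs
  rw [C_comp, Odd.neg_one_pow (by exact hpe.add_one)] at hs
  have : (2 : Polynomial ℝ) * C c = 0 := by linear_combination hs
  rw [hc]
  have hc0 : C c = 0 := by
    have h2 : (2 : Polynomial ℝ) ≠ 0 := two_ne_zero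
    exact (mul_eq_zero.mp this).resolve_left h2
  rw [hc0]
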